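/- (General Intersecting Balls Property) Let v_1, ..., v_n be points in ℝ^m (n ≥ 1), let r_1, ..., r_n be positive reals, and let B_i = {x ∈ ℝ^m : d(x, v_i) < r_i}. Suppose p ∈ ℝ^m satisfies d(p, v_i) = r_i for all i. Then p ∈ conv({v_1, ..., v_n}) if and only if ⋂_{i=1}^n B_i = ∅. -/

import Mathlib

set_option maxHeartbeats 1000000

open Finset

/-- **General Intersecting Balls Property**. If `p` is a common boundary point of the open
balls `B i = ball (v i) (r i)`, then `p ∈ conv({v 1, …, v n})` iff the open balls have
empty intersection. -/
theorem general_intersecting_balls_property {m n : ℕ} (hn : 0 < n)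
    (v : Fin n → EuclideanSpace ℝ (Fin m)) (r : Fin n → ℝ) (hr : ∀ i, 0 < r i)
    (p : EuclideanSpace ℝ (Fin m)) (hp : ∀ i, dist p (v i) = r i) :
    p ∈ convexHull ℝ (Set.range v) ↔
      (⋂ i : Fin n, Metric.ball (v i) (r i)) = ∅ := by
  constructor
  · -- convex combination ⇒ empty intersection
    intro hmem
    rw [convexHull_range_eq_exists_affineCombination] at hmem
    obtain ⟨s, w, hw0, hw1, hwp⟩ := hmem
    rw [Finset.affineCombination_eq_linear_combination s v w hw1] at hwp
    rw [Set.eq_empty_iff_forall_notMem]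
    intro x hx
    simp only [Set.mem_iInter, Metric.mem_ball] at hx
    have key : ∀ y : EuclideanSpace ℝ (Fin m),
        ∑ i ∈ s, w i * ‖y - v i‖ ^ 2
          = ‖y - p‖ ^ 2 + (∑ i ∈ s, w i * ‖v i‖ ^ 2 - ‖p‖ ^ 2) := by
      intro y
      have expand : ∀ z : EuclideanSpace ℝ (Fin m),
          ‖y - z‖ ^ 2 = ‖y‖ ^ 2 - 2 * inner ℝ y z + ‖z‖ ^ 2 := by
        intro z
        have h := @norm_sub_sq_real (EuclideanSpace ℝ (Fin m)) _ _ y z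
        nlinarith [h]
      have hinner : (inner ℝ y p : ℝ) = ∑ i ∈ s, w i * inner ℝ y (v i) := by
        rw [← hwp, inner_sum]
        exact Finset.sum_congr rfl fun i _ => real_inner_smul_right y (v i) (w i)
      calc ∑ i ∈ s, w i * ‖y - v i‖ ^ 2
          = ∑ i ∈ s, (w i * ‖y‖ ^ 2 - 2 * (w i * inner ℝ y (v i)) + w i * ‖v i‖ ^ 2) := by
            refine Finset.sum_congr rfl fun i _ => ?_
            rw [expand (v i)]; ring
        _ = (∑ i ∈ s, w i) * ‖y‖ ^ 2 - 2 * ∑ i ∈ s, w i * inner ℝ y (v i)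
              + ∑ i ∈ s, w i * ‖v i‖ ^ 2 := by
            rw [Finset.sum_add_distrib, Finset.sum_sub_distrib, ← Finset.sum_mul,
              Finset.mul_sum]
        _ = ‖y - p‖ ^ 2 + (∑ i ∈ s, w i * ‖v i‖ ^ 2 - ‖p‖ ^ 2) := by
            rw [hw1, ← hinner, expand p]; ring
    -- strict inequality of weighted sums
    have hdist : ∀ i, ‖x - v i‖ < ‖p - v i‖ := by
      intro i
      rw [← dist_eq_norm, ← dist_eq_norm, hp i]
      exact hx i
    obtain ⟨i0, hi0s, hi0⟩ : ∃ i ∈ s, (0 : ℝ) < w i := by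
      by_contra h
      push_neg at h
      have : (∑ i ∈ s, w i) ≤ 0 := Finset.sum_nonpos fun i hi => h i hi
      linarith [hw1 ▸ this]
    have hlt : ∑ i ∈ s, w i * ‖x - v i‖ ^ 2 < ∑ i ∈ s, w i * ‖p - v i‖ ^ 2 := by
      refine Finset.sum_lt_sum (fun i hi => ?_) ⟨i0, hi0s, ?_⟩
      · have h1 : ‖x - v i‖ ^ 2 ≤ ‖p - v i‖ ^ 2 := by
          nlinarith [hdist i, norm_nonneg (x - v i)]
        exact mul_le_mul_of_nonneg_left h1 (hw0 i hi)
      · have h1 : ‖x - v i0‖ ^ 2 < ‖p - v i0‖ ^ 2 := by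
          nlinarith [hdist i0, norm_nonneg (x - v i0)]
        exact mul_lt_mul_of_pos_left h1 hi0
    rw [key x, key p] at hlt
    simp only [sub_self, norm_zero] at hlt
    nlinarith [sq_nonneg ‖x - p‖, hlt]
  · -- empty intersection ⇒ p in the convex hull
    intro hI
    by_contra hmem
    have hcl : IsClosed (convexHull ℝ (Set.range v)) :=
      (Set.finite_range v).isClosed_convexHull ℝ
    obtain ⟨f, t, hft, htp⟩ :=
      geometric_hahn_banach_closed_point (convex_convexHull ℝ _) hcl hmem
    set u := (InnerProductSpace.toDual ℝ (EuclideanSpace ℝ (Fin m))).symm f with hu_def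
    have hu : ∀ x : EuclideanSpace ℝ (Fin m), (inner ℝ u x : ℝ) = f x := fun x =>
      InnerProductSpace.toDual_symm_apply
    set δ := f p - t with hδ_def
    have hδpos : 0 < δ := by simp [hδ_def]; linarith
    have hsep : ∀ i, δ < (inner ℝ u (p - v i) : ℝ) := by
      intro i
      rw [hu, map_sub]
      have : f (v i) < t := hft (v i) (subset_convexHull ℝ _ (Set.mem_range_self i))
      simp [hδ_def]; linarith
    have hune : u ≠ 0 := by
      intro h
      have := hsep ⟨0, hn⟩
      rw [h, inner_zero_left] at this
      linarith
    have hnu : (0 : ℝ) < ‖u‖ ^ 2 := pow_pos (norm_pos_iff.2 hune) 2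
    set c := δ / ‖u‖ ^ 2 with hc_def
    have hcpos : 0 < c := div_pos hδpos hnu
    set x := p - c • u with hx_def
    have hxball : ∀ i, x ∈ Metric.ball (v i) (r i) := by
      intro i
      have hxvi : x - v i = (p - v i) - c • u := by rw [hx_def]; abel
      have hexp : ‖x - v i‖ ^ 2
          = ‖p - v i‖ ^ 2 - 2 * (c * inner ℝ (p - v i) u) + c ^ 2 * ‖u‖ ^ 2 := by
        rw [hxvi]
        have h := @norm_sub_sq_real (EuclideanSpace ℝ (Fin m)) _ _ (p - v i) (c • u)
        rw [real_inner_smul_right, norm_smul] at h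
        have habs : |c| = c := abs_of_pos hcpos
        rw [Real.norm_eq_abs, habs] at h
        nlinarith [h]
      have hinner : δ < (inner ℝ (p - v i) u : ℝ) := by
        rw [real_inner_comm]; exact hsep i
      have hri : ‖p - v i‖ = r i := by rw [← dist_eq_norm]; exact hp i
      have hc2 : c ^ 2 * ‖u‖ ^ 2 = c * δ := by
        rw [hc_def]; field_simp
      have hsq : ‖x - v i‖ ^ 2 < r i ^ 2 := by
        rw [hexp, hri, hc2]
        nlinarith [mul_lt_mul_of_pos_left hinner hcpos]
      rw [Metric.mem_ball, dist_eq_norm]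
      exact lt_of_pow_lt_pow_left₀ 2 (hr i).le hsq
    have : x ∈ ⋂ i : Fin n, Metric.ball (v i) (r i) := Set.mem_iInter.2 hxball
    rw [hI] at this
    exact this
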